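/- For every odd n ≥ 3 there exists a tree T with n² vertices and maximum degree Δ(T) < n²/2 such that Oχ(T) = n + 1. -/

import Mathlib

namespace OrthProofAux
open SimpleGraph

/-- Graph on `Fin m` induced by a parent function on ℕ. -/
def pg (m : ℕ) (p : ℕ → ℕ) : SimpleGraph (Fin m) :=
  SimpleGraph.fromRel (fun x y => p x.val = y.val ∧ y.val < x.val)

lemma pg_adj {m : ℕ} {p : ℕ → ℕ} {x y : Fin m} :
    (pg m p).Adj x y ↔
      x ≠ y ∧ ((p x.val = y.val ∧ y.val < x.val) ∨ (p y.val = x.val ∧ x.val < y.val)) :=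
  Iff.rfl

lemma pg_conn {m : ℕ} (p : ℕ → ℕ) (hm : 0 < m) (hp : ∀ x, x ≠ 0 → p x < x) :
    (pg m p).Connected := by
  have key : ∀ k (x : Fin m), x.val ≤ k → (pg m p).Reachable x ⟨0, hm⟩ := by
    intro k
    induction k with
    | zero =>
      intro x hx
      have : x = ⟨0, hm⟩ := Fin.ext (by simpa using hx)
      exact this ▸ SimpleGraph.Reachable.refl _
    | succ k ih =>
      intro x hx
      rcases eq_or_ne x.val 0 with h0 | h0
      · have : x = ⟨0, hm⟩ := Fin.ext h0
        exact this ▸ SimpleGraph.Reachable.refl _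
      · have hlt : p x.val < x.val := hp _ h0
        have hadj : (pg m p).Adj x ⟨p x.val, lt_trans hlt x.isLt⟩ := by
          rw [pg_adj]
          refine ⟨?_, Or.inl ⟨rfl, hlt⟩⟩
          intro h
          have := congrArg Fin.val h
          simp at this
          omega
        exact hadj.reachable.trans (ih _ (by simp; omega))
  rw [SimpleGraph.connected_iff]
  exact ⟨fun x y => (key m x x.isLt.le).trans ((key m y y.isLt.le).symm), ⟨⟨0, hm⟩⟩⟩

lemma pg_acyclic {m : ℕ} (p : ℕ → ℕ) (hp : ∀ x, x ≠ 0 → p x < x) :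
    (pg m p).IsAcyclic := by
  intro v c hc
  obtain ⟨x, hx, hmax⟩ : ∃ x ∈ c.support, ∀ w ∈ c.support, w ≤ x := by
    have hne : c.support.toFinset.Nonempty := by
      simp [List.toFinset_nonempty_iff, SimpleGraph.Walk.support_ne_nil]
    refine ⟨c.support.toFinset.max' hne, ?_, ?_⟩
    · simpa using c.support.toFinset.max'_mem hne
    · intro w hw
      exact Finset.le_max' _ _ (by simpa using hw)
  obtain ⟨c', hc', hmax'⟩ :
      ∃ c' : (pg m p).Walk x x, c'.IsCycle ∧ ∀ w ∈ c'.support, w ≤ x := by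
    refine ⟨c.rotate x hx, hc.rotate hx, ?_⟩
    intro w hw
    rw [SimpleGraph.Walk.support_eq_cons] at hw
    rcases List.mem_cons.1 hw with hw | hw
    · exact hw ▸ le_refl x
    · exact hmax w (List.mem_of_mem_tail
        (((SimpleGraph.Walk.support_rotate c x hx).mem_iff).1 hw))
  cases c' with
  | nil => exact hc'.ne_nil rfl
  | @cons _ y _ hadj q =>
    have h3 := hc'.three_le_length
    rw [SimpleGraph.Walk.length_cons] at h3
    rw [SimpleGraph.Walk.cons_isCycle_iff] at hc'
    have hyx : y.val < x.val := by
      have h1 : y ≤ x := hmax' y (by simp [SimpleGraph.Walk.support_cons])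
      have h2 : y ≠ x := hadj.ne'
      have := Fin.lt_def.mp (lt_of_le_of_ne h1 h2)
      exact this
    have hpx : p x.val = y.val := by
      rcases (pg_adj.1 hadj).2 with ⟨h1, _⟩ | ⟨_, h2⟩
      · exact h1
      · omega
    obtain ⟨pr, hpr, hprsub, hprlen⟩ :
        ∃ pr : (pg m p).Walk x y, pr.IsPath ∧ (∀ w ∈ pr.support, w ≤ x) ∧ 2 ≤ pr.length := by
      refine ⟨q.reverse, hc'.1.reverse, ?_, by
        rw [SimpleGraph.Walk.length_reverse]; omega⟩
      intro w hw
      rw [SimpleGraph.Walk.support_reverse, List.mem_reverse] at hw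
      exact hmax' w (by simp [SimpleGraph.Walk.support_cons, hw])
    cases pr with
    | nil => simp at hprlen
    | @cons _ z _ h2 q2 =>
      have hzx : z.val < x.val := by
        have h1 : z ≤ x := hprsub z (by simp [SimpleGraph.Walk.support_cons])
        have hne : z ≠ x := h2.ne'
        exact Fin.lt_def.mp (lt_of_le_of_ne h1 hne)
      have hpz : p x.val = z.val := by
        rcases (pg_adj.1 h2).2 with ⟨h1, _⟩ | ⟨_, hge⟩
        · exact h1
        · omega
      have hzy : z = y := Fin.ext (by omega)
      subst hzy
      have : q2 = SimpleGraph.Walk.nil := by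
        rw [← SimpleGraph.Walk.isPath_iff_eq_nil]
        exact hpr.of_cons
      subst this
      simp [SimpleGraph.Walk.length_cons] at hprlen





/-- parent function: vertex 0 = centre u, 1 = middle w, 2 = centre v,
`3..2+a` leaves of v, `≥ 3+a` leaves of u. -/
def parN (a x : ℕ) : ℕ :=
  if x = 2 then 1 else if 3 ≤ x ∧ x ≤ 2 + a then 2 else 0

lemma parN_le_two (a x : ℕ) : parN a x ≤ 2 := by
  unfold parN; split_ifs <;> omega

lemma parN_lt (a : ℕ) {x : ℕ} (hx : x ≠ 0) : parN a x < x := by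
  unfold parN; split_ifs <;> omega

/-- first colour (row) of vertex `x` in the `(n+1) × (n+1)` grid -/
def rowf (n x : ℕ) : ℕ :=
  if x = 0 then 0 else if x = 1 then 2 else if x = 2 then 1
  else if x - 2 < (n-1)*(n-1) then 2 + (x-2)/(n-1)
  else if x - 2 < (n-1)*(n-1) + (n-1) then 1
  else 2 + (x - 2 - (n-1)*(n-1) - (n-1))

/-- second colour (column) -/
def colf (n x : ℕ) : ℕ :=
  if x = 0 then 0 else if x = 1 then 2 else if x = 2 then 1
  else if x - 2 < (n-1)*(n-1) then 2 + (x-2) % (n-1)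
  else if x - 2 < (n-1)*(n-1) + (n-1) then 2 + (x - 2 - (n-1)*(n-1))
  else 1

section facts
variable {n a : ℕ} (hn3 : 3 ≤ n) (hm : n^2 = 2*a + 3)

lemma hD (hn3 : 3 ≤ n) : (n-1)*(n-1) + 2*n = n^2 + 1 := by
  obtain ⟨k, rfl⟩ : ∃ k, n = k + 1 := ⟨n-1, by omega⟩
  simp only [Nat.add_sub_cancel]
  ring_nf

lemma hE (hn3 : 3 ≤ n) : (n-1)*(n-3) + 4*n = n^2 + 3 := by
  obtain ⟨k, rfl⟩ : ∃ k, n = k + 3 := ⟨n-3, by omega⟩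
  simp only [show k+3-1 = k+2 from rfl, show k+3-3 = k from rfl]
  ring

/-- `a + 1 ≤ (n-1)*(n-1)` : leaves of `v` fit into the inner block -/
lemma ha_le (hn3 : 3 ≤ n) (hm : n^2 = 2*a + 3) : a + 1 ≤ (n-1)*(n-1) := by
  have h1 := hD hn3
  have h2 := hE hn3
  omega

lemma ha_pos (hn3 : 3 ≤ n) (hm : n^2 = 2*a + 3) : 1 ≤ a := by
  have : 3*3 ≤ n*n := Nat.mul_le_mul hn3 hn3
  have : n^2 = n*n := sq n
  omega

/-- bounds: colours are at most n -/
lemma rowf_le (hn3 : 3 ≤ n) (hm : n^2 = 2*a + 3) {x : ℕ} (hx : x ≤ 2*a + 2) :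
    rowf n x ≤ n ∧ colf n x ≤ n := by
  have hd1 : 1 ≤ n - 1 := by omega
  have hDn := hD hn3
  unfold rowf colf
  split_ifs with h0 h1 h2 h3 h4 <;> try omega
  · -- branch 1
    have hdiv : (x-2)/(n-1) < n-1 := by
      rw [Nat.div_lt_iff_lt_mul (by omega)]
      omega
    have hmod : (x-2) % (n-1) < n-1 := Nat.mod_lt _ (by omega)
    omega

lemma div_mod_inj {d q q' : ℕ} (h1 : q/d = q'/d) (h2 : q%d = q'%d) : q = q' := by
  rw [← Nat.div_add_mod q d, h1, h2, Nat.div_add_mod]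

set_option maxHeartbeats 1600000 in
/-- injectivity of the cell map -/
lemma cell_inj (hn3 : 3 ≤ n) (hm : n^2 = 2*a + 3) {x y : ℕ}
    (hx : x ≤ 2*a + 2) (hy : y ≤ 2*a + 2)
    (hrow : rowf n x = rowf n y) (hcol : colf n x = colf n y) : x = y := by
  have hd1 : 1 ≤ n - 1 := by omega
  have hDn := hD hn3
  obtain ⟨dx, mx, hxe, hxm, hxd, hxr⟩ :
      ∃ d m, (n-1)*d + m = x - 2 ∧ m < n-1 ∧ (x-2)/(n-1) = d ∧ (x-2)%(n-1) = m :=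
    ⟨_, _, Nat.div_add_mod _ _, Nat.mod_lt _ (by omega), rfl, rfl⟩
  obtain ⟨dy, my, hye, hym, hyd, hyr⟩ :
      ∃ d m, (n-1)*d + m = y - 2 ∧ m < n-1 ∧ (y-2)/(n-1) = d ∧ (y-2)%(n-1) = m :=
    ⟨_, _, Nat.div_add_mod _ _, Nat.mod_lt _ (by omega), rfl, rfl⟩
  unfold rowf at hrow
  unfold colf at hcol
  rw [hxd, hyd] at hrow
  rw [hxr, hyr] at hcol
  split_ifs at hrow hcol <;>
    first
    | omega
    | (have h1 : dx = dy := by omega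
       have h2 : mx = my := by omega
       rw [h1, h2] at hxe
       omega)
    | (have h1 : dx = 0 := by omega
       have h2 : mx = 0 := by omega
       rw [h1, h2] at hxe
       simp at hxe
       omega)
    | (have h1 : dy = 0 := by omega
       have h2 : my = 0 := by omega
       rw [h1, h2] at hye
       simp at hye
       omega)

@[simp] lemma rowf_zero : rowf n 0 = 0 := by simp [rowf]
@[simp] lemma colf_zero : colf n 0 = 0 := by simp [colf]
@[simp] lemma rowf_one : rowf n 1 = 2 := by simp [rowf]
@[simp] lemma colf_one : colf n 1 = 2 := by simp [colf]
@[simp] lemma rowf_two : rowf n 2 = 1 := by simp [rowf]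
@[simp] lemma colf_two : colf n 2 = 1 := by simp [colf]

lemma rowf_ge_one {x : ℕ} (h3 : 3 ≤ x) : 1 ≤ rowf n x ∧ 1 ≤ colf n x := by
  unfold rowf colf
  obtain ⟨dd, hdd⟩ : ∃ dd, (x-2)/(n-1) = dd := ⟨_, rfl⟩
  obtain ⟨mm, hmm⟩ : ∃ mm, (x-2)%(n-1) = mm := ⟨_, rfl⟩
  rw [hdd, hmm]
  clear hdd hmm
  split_ifs <;> omega

/-- leaves of `v` land in the inner block : both colours at least 2 -/
lemma rowf_ge_two (hn3 : 3 ≤ n) (hm : n^2 = 2*a + 3) {x : ℕ}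
    (h3 : 3 ≤ x) (hxa : x ≤ 2 + a) : 2 ≤ rowf n x ∧ 2 ≤ colf n x := by
  have hle := ha_le hn3 hm
  have hb1 : x - 2 < (n-1)*(n-1) := by omega
  unfold rowf colf
  obtain ⟨dd, hdd⟩ : ∃ dd, (x-2)/(n-1) = dd := ⟨_, rfl⟩
  obtain ⟨mm, hmm⟩ : ∃ mm, (x-2)%(n-1) = mm := ⟨_, rfl⟩
  rw [hdd, hmm]
  clear hdd hmm
  split_ifs <;> omega

/-- the two endpoint colours of every edge differ (in both coordinates) -/
lemma edge_ne (hn3 : 3 ≤ n) (hm : n^2 = 2*a + 3) {x y : ℕ}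
    (hpar : parN a x = y) (hyx : y < x) :
    rowf n x ≠ rowf n y ∧ colf n x ≠ colf n y := by
  unfold parN at hpar
  split_ifs at hpar with h1 h2
  · -- x = 2, y = 1
    subst h1
    have : y = 1 := hpar.symm
    subst this
    simp
  · -- 3 ≤ x ≤ 2 + a, y = 2
    have : y = 2 := hpar.symm
    subst this
    have := rowf_ge_two hn3 hm h2.1 h2.2
    simp
    omega
  · -- y = 0 : x = 1 or x ≥ 3
    have : y = 0 := hpar.symm
    subst this
    rcases Nat.lt_or_ge x 3 with h | h
    · have : x = 1 := by omega
      subst this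
      simp
    · have := rowf_ge_one (n := n) h
      simp
      omega

end facts

open SimpleGraph in
lemma deg_bound {m a : ℕ} (hm : m = 2*a + 3) (ha : 1 ≤ a) (hm9 : 9 ≤ m) (v : Fin m) :
    2 * ((pg m (parN a)).neighborSet v).ncard < m := by
  have key : ∀ S : Finset (Fin m), ((pg m (parN a)).neighborSet v) ⊆ ↑S → 2 * S.card < m →
      2 * ((pg m (parN a)).neighborSet v).ncard < m := by
    intro S hS hc
    have := Set.ncard_le_ncard hS S.finite_toSet
    rw [Set.ncard_coe_finset] at this
    omega
  obtain ⟨F0, hF0⟩ : ∃ x : Fin m, x.val = 0 := ⟨⟨0, by omega⟩, rfl⟩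
  obtain ⟨F1, hF1⟩ : ∃ x : Fin m, x.val = 1 := ⟨⟨1, by omega⟩, rfl⟩
  obtain ⟨F2, hF2⟩ : ∃ x : Fin m, x.val = 2 := ⟨⟨2, by omega⟩, rfl⟩
  obtain ⟨F3, hF3⟩ : ∃ x : Fin m, x.val = 3 := ⟨⟨3, by omega⟩, rfl⟩
  obtain ⟨F3a, hF3a⟩ : ∃ x : Fin m, x.val = 3 + a := ⟨⟨3+a, by omega⟩, rfl⟩
  rcases Nat.lt_or_ge v.val 3 with h3 | h3
  · interval_cases hvv : v.val
    · -- v = 0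
      refine key (insert F1 (Finset.Ici F3a)) ?_ ?_
      · intro y hy
        rw [SimpleGraph.mem_neighborSet, pg_adj] at hy
        obtain ⟨hne, hca⟩ := hy
        rcases hca with ⟨_, hlt⟩ | ⟨hpar, hlt⟩
        · omega
        · rw [hvv] at hpar hlt
          simp only [Finset.coe_insert, Set.mem_insert_iff, Finset.coe_Ici, Set.mem_Ici]
          unfold parN at hpar
          split_ifs at hpar <;>
            first
            | omega
            | (left; exact Fin.ext (by omega))
            | (right; exact Fin.ext (by omega))
            | (right; exact ⟨by rw [Fin.le_def]; omega, by rw [Fin.lt_def]; omega⟩)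
            | (exact Or.imp (fun h => Fin.ext (by omega))
                (fun h => by rw [Fin.le_def]; omega) (Nat.lt_or_ge y.val 2))
      · have h1 : (Finset.Ici F3a).card = m - F3a.val := by rw [Fin.card_Ici]
        have h2 := Finset.card_insert_le F1 (Finset.Ici F3a)
        omega
    · -- v = 1
      refine key (insert F0 {F2}) ?_ ?_
      · intro y hy
        rw [SimpleGraph.mem_neighborSet, pg_adj] at hy
        obtain ⟨hne, hca⟩ := hy
        simp only [Finset.coe_insert, Set.mem_insert_iff, Finset.coe_singleton,
          Set.mem_singleton_iff]
        rcases hca with ⟨hpar, hlt⟩ | ⟨hpar, hlt⟩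
        · rw [hvv] at hpar hlt
          unfold parN at hpar
          split_ifs at hpar <;>
            first
            | omega
            | (left; exact Fin.ext (by omega))
            | (right; exact Fin.ext (by omega))
            | (right; exact ⟨by rw [Fin.le_def]; omega, by rw [Fin.lt_def]; omega⟩)
            | (exact Or.imp (fun h => Fin.ext (by omega))
                (fun h => by rw [Fin.le_def]; omega) (Nat.lt_or_ge y.val 2))
        · rw [hvv] at hpar hlt
          unfold parN at hpar
          split_ifs at hpar <;>
            first
            | omega
            | (left; exact Fin.ext (by omega))
            | (right; exact Fin.ext (by omega))
            | (right; exact ⟨by rw [Fin.le_def]; omega, by rw [Fin.lt_def]; omega⟩)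
            | (exact Or.imp (fun h => Fin.ext (by omega))
                (fun h => by rw [Fin.le_def]; omega) (Nat.lt_or_ge y.val 2))
      · have h2 := Finset.card_insert_le F0 ({F2} : Finset (Fin m))
        have h3 : ({F2} : Finset (Fin m)).card = 1 := Finset.card_singleton F2
        omega
    · -- v = 2
      refine key (insert F1 (Finset.Ico F3 F3a)) ?_ ?_
      · intro y hy
        rw [SimpleGraph.mem_neighborSet, pg_adj] at hy
        obtain ⟨hne, hca⟩ := hy
        simp only [Finset.coe_insert, Set.mem_insert_iff, Finset.coe_Ico, Set.mem_Ico]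
        rcases hca with ⟨hpar, hlt⟩ | ⟨hpar, hlt⟩
        · rw [hvv] at hpar hlt
          unfold parN at hpar
          split_ifs at hpar <;>
            first
            | omega
            | (left; exact Fin.ext (by omega))
            | (right; exact Fin.ext (by omega))
            | (right; exact ⟨by rw [Fin.le_def]; omega, by rw [Fin.lt_def]; omega⟩)
            | (exact Or.imp (fun h => Fin.ext (by omega))
                (fun h => by rw [Fin.le_def]; omega) (Nat.lt_or_ge y.val 2))
        · rw [hvv] at hpar hlt
          unfold parN at hpar
          split_ifs at hpar <;>
            first
            | omega
            | (left; exact Fin.ext (by omega))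
            | (right; exact Fin.ext (by omega))
            | (right; exact ⟨by rw [Fin.le_def]; omega, by rw [Fin.lt_def]; omega⟩)
            | (exact Or.imp (fun h => Fin.ext (by omega))
                (fun h => by rw [Fin.le_def]; omega) (Nat.lt_or_ge y.val 2))
      · have h1 : (Finset.Ico F3 F3a).card = F3a.val - F3.val := by rw [Fin.card_Ico]
        have h2 := Finset.card_insert_le F1 (Finset.Ico F3 F3a)
        omega
  · -- leaf
    refine key {⟨parN a v.val, by have := parN_le_two a v.val; omega⟩} ?_ ?_
    · intro y hy
      rw [SimpleGraph.mem_neighborSet, pg_adj] at hy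
      obtain ⟨hne, hca⟩ := hy
      simp only [Finset.coe_singleton, Set.mem_singleton_iff]
      rcases hca with ⟨hpar, hlt⟩ | ⟨hpar, hlt⟩
      · exact Fin.ext hpar.symm
      · have := parN_le_two a y.val
        omega
    · rw [Finset.card_singleton]
      omega


open SimpleGraph in
lemma upper {n m a : ℕ} (hn3 : 3 ≤ n) (hmn : m = n^2) (hm : n^2 = 2*a + 3) :
    ∃ c₁ c₂ : Fin m → Fin (n+1),
      (∀ ⦃u v : Fin m⦄, (pg m (parN a)).Adj u v → c₁ u ≠ c₁ v) ∧
      (∀ ⦃u v : Fin m⦄, (pg m (parN a)).Adj u v → c₂ u ≠ c₂ v) ∧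
      Function.Injective (fun v => (c₁ v, c₂ v)) := by
  have hb : ∀ v : Fin m, rowf n v.val ≤ n ∧ colf n v.val ≤ n := by
    intro v
    exact rowf_le hn3 hm (by have := v.isLt; omega)
  refine ⟨fun v => ⟨rowf n v.val, by have := (hb v).1; omega⟩,
          fun v => ⟨colf n v.val, by have := (hb v).2; omega⟩, ?_, ?_, ?_⟩
  · intro u v huv heq
    have h := congrArg Fin.val heq
    simp only at h
    obtain ⟨hne, hca⟩ := pg_adj.1 huv
    rcases hca with ⟨hpar, hlt⟩ | ⟨hpar, hlt⟩
    · exact (edge_ne hn3 hm hpar hlt).1 h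
    · exact (edge_ne hn3 hm hpar hlt).1 h.symm
  · intro u v huv heq
    have h := congrArg Fin.val heq
    simp only at h
    obtain ⟨hne, hca⟩ := pg_adj.1 huv
    rcases hca with ⟨hpar, hlt⟩ | ⟨hpar, hlt⟩
    · exact (edge_ne hn3 hm hpar hlt).2 h
    · exact (edge_ne hn3 hm hpar hlt).2 h.symm
  · intro u v h
    simp only [Prod.mk.injEq, Fin.mk.injEq] at h
    exact Fin.ext (cell_inj hn3 hm (by have := u.isLt; omega) (by have := v.isLt; omega)
      h.1 h.2)

open SimpleGraph in
lemma lower {n m a k : ℕ} (hn3 : 3 ≤ n) (hmn : m = n^2) (hm : n^2 = 2*a + 3)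
    (c₁ c₂ : Fin m → Fin k)
    (hp1 : ∀ ⦃u v : Fin m⦄, (pg m (parN a)).Adj u v → c₁ u ≠ c₁ v)
    (hp2 : ∀ ⦃u v : Fin m⦄, (pg m (parN a)).Adj u v → c₂ u ≠ c₂ v)
    (hinj : Function.Injective (fun v => (c₁ v, c₂ v))) : n + 1 ≤ k := by
  by_contra hcon
  push_neg at hcon
  have hnn : n^2 = n*n := sq n
  have hm9 : 9 ≤ m := by
    have := Nat.mul_le_mul hn3 hn3
    omega
  have hcard : m ≤ k * k := by
    have h := Fintype.card_le_of_injective _ hinj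
    simpa [Fintype.card_prod] using h
  have hkn : n = k := by
    rcases Nat.lt_or_ge k n with h | h
    · have := Nat.mul_lt_mul'' h h
      omega
    · omega
  subst hkn
  have hsurj : Function.Surjective (fun v : Fin m => (c₁ v, c₂ v)) := by
    have hcards : Fintype.card (Fin m) = Fintype.card (Fin n × Fin n) := by
      simp [Fintype.card_prod]
      omega
    exact ((Fintype.bijective_iff_injective_and_card _).2 ⟨hinj, hcards⟩).2
  obtain ⟨F0, hF0⟩ : ∃ x : Fin m, x.val = 0 := ⟨⟨0, by omega⟩, rfl⟩
  obtain ⟨F1, hF1⟩ : ∃ x : Fin m, x.val = 1 := ⟨⟨1, by omega⟩, rfl⟩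
  obtain ⟨F2, hF2⟩ : ∃ x : Fin m, x.val = 2 := ⟨⟨2, by omega⟩, rfl⟩
  have hA1 : (pg m (parN a)).Adj F1 F0 := by
    rw [pg_adj]
    refine ⟨fun h => by have := congrArg Fin.val h; omega, Or.inl ⟨?_, by omega⟩⟩
    rw [hF0, hF1]
    simp [parN]
  have hA2 : (pg m (parN a)).Adj F2 F1 := by
    rw [pg_adj]
    refine ⟨fun h => by have := congrArg Fin.val h; omega, Or.inl ⟨?_, by omega⟩⟩
    rw [hF1, hF2]
    simp [parN]
  have hA3 : ∀ z : Fin m, 3 ≤ z.val → z.val ≤ 2 + a → (pg m (parN a)).Adj z F2 := by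
    intro z h1 h2
    rw [pg_adj]
    refine ⟨fun h => by have := congrArg Fin.val h; omega, Or.inl ⟨?_, by omega⟩⟩
    rw [hF2]
    unfold parN
    split_ifs <;> omega
  have hA4 : ∀ z : Fin m, 3 + a ≤ z.val → (pg m (parN a)).Adj z F0 := by
    intro z h1
    rw [pg_adj]
    refine ⟨fun h => by have := congrArg Fin.val h; omega, Or.inl ⟨?_, by omega⟩⟩
    rw [hF0]
    unfold parN
    split_ifs <;> omega
  have claim : ∀ z : Fin m, (c₁ z = c₁ F0 ∨ c₂ z = c₂ F0) →
      (c₁ z = c₁ F2 ∨ c₂ z = c₂ F2) → z = F0 ∨ z = F2 := by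
    intro z h0 h2c
    rcases Nat.lt_or_ge z.val 3 with h | h
    · interval_cases hzz : z.val
      · left; exact Fin.ext (by omega)
      · exfalso
        have hz1 : z = F1 := Fin.ext (by omega)
        rcases h0 with hh | hh
        · exact hp1 hA1 (hz1 ▸ hh)
        · exact hp2 hA1 (hz1 ▸ hh)
      · right; exact Fin.ext (by omega)
    · rcases Nat.lt_or_ge (2 + a) z.val with hzc | hzc
      · exfalso
        have hadj := hA4 z (by omega)
        rcases h0 with hh | hh
        · exact hp1 hadj hh
        · exact hp2 hadj hh
      · exfalso
        have hadj := hA3 z h hzc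
        rcases h2c with hh | hh
        · exact hp1 hadj hh
        · exact hp2 hadj hh
  have fresh : ∀ b c : Fin n, ∃ j : Fin n, j ≠ b ∧ j ≠ c := by
    intro b c
    have hcompl : (({b, c} : Finset (Fin n))ᶜ).Nonempty := by
      rw [← Finset.card_pos, Finset.card_compl]
      have h1 : ({b, c} : Finset (Fin n)).card ≤ 2 :=
        le_trans (Finset.card_insert_le _ _) (by simp)
      have h2 : Fintype.card (Fin n) = n := Fintype.card_fin n
      omega
    obtain ⟨j, hj⟩ := hcompl
    rw [Finset.mem_compl, Finset.mem_insert, Finset.mem_singleton] at hj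
    push_neg at hj
    exact ⟨j, hj.1, hj.2⟩
  rcases eq_or_ne (c₁ F0) (c₁ F2) with hii | hii
  · obtain ⟨j, hj0, hj2⟩ := fresh (c₂ F0) (c₂ F2)
    obtain ⟨z, hz⟩ := hsurj (c₁ F0, j)
    simp only [Prod.mk.injEq] at hz
    rcases claim z (Or.inl hz.1) (Or.inl (by rw [hz.1, hii])) with rfl | rfl
    · exact hj0 hz.2.symm
    · exact hj2 hz.2.symm
  · rcases eq_or_ne (c₂ F0) (c₂ F2) with hjj | hjj
    · obtain ⟨i, hi0, hi2⟩ := fresh (c₁ F0) (c₁ F2)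
      obtain ⟨z, hz⟩ := hsurj (i, c₂ F0)
      simp only [Prod.mk.injEq] at hz
      rcases claim z (Or.inr hz.2) (Or.inr (by rw [hz.2, hjj])) with rfl | rfl
      · exact hi0 hz.1.symm
      · exact hi2 hz.1.symm
    · obtain ⟨z, hz⟩ := hsurj (c₁ F0, c₂ F2)
      simp only [Prod.mk.injEq] at hz
      rcases claim z (Or.inl hz.1) (Or.inr hz.2) with rfl | rfl
      · exact hjj hz.2
      · exact hii hz.1.symm

end OrthProofAux

/-- `G` admits two orthogonal proper colourings, each using at most `k` colours:
two proper colourings such that no two distinct vertices receive the same pair of colours. -/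
def HasOrthColoring {V : Type*} (G : SimpleGraph V) (k : ℕ) : Prop :=
  ∃ c₁ c₂ : V → Fin k,
    (∀ ⦃u v⦄, G.Adj u v → c₁ u ≠ c₁ v) ∧
    (∀ ⦃u v⦄, G.Adj u v → c₂ u ≠ c₂ v) ∧
    Function.Injective fun v => (c₁ v, c₂ v)

set_option maxHeartbeats 1000000 in
/-- For every odd `n ≥ 3` there is a tree `T` with `n²` vertices and maximum degree
`Δ(T) < n²/2` (equivalently, every degree `< n²/2`) such that `Oχ(T) = n + 1`. -/
theorem exists_tree_orthChromatic_succ (n : ℕ) (hn : Odd n) (hn3 : 3 ≤ n) :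
    ∃ (V : Type) (T : SimpleGraph V),
      Nat.card V = n ^ 2 ∧ T.Connected ∧ T.IsAcyclic ∧
      (∀ v : V, 2 * (T.neighborSet v).ncard < n ^ 2) ∧
      IsLeast {k | HasOrthColoring T k} (n + 1) := by
  have hnn : n^2 = n*n := sq n
  have h9 : 9 ≤ n^2 := by
    have := Nat.mul_le_mul hn3 hn3
    omega
  obtain ⟨r, hr⟩ : Odd (n^2) := hn.pow
  set a := (n^2 - 3)/2 with ha
  have hm : n^2 = 2*a + 3 := by omega
  have ha1 : 1 ≤ a := by omega
  refine ⟨Fin (n^2), OrthProofAux.pg (n^2) (OrthProofAux.parN a), by simp,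
    OrthProofAux.pg_conn _ (by omega) (fun x hx => OrthProofAux.parN_lt a hx),
    OrthProofAux.pg_acyclic _ (fun x hx => OrthProofAux.parN_lt a hx),
    fun v => OrthProofAux.deg_bound (m := n^2) hm ha1 h9 v, ?_, ?_⟩
  · obtain ⟨c₁, c₂, h1, h2, h3⟩ := OrthProofAux.upper hn3 rfl hm
    exact ⟨c₁, c₂, h1, h2, h3⟩
  · intro k hk
    obtain ⟨c₁, c₂, h1, h2, h3⟩ := hk
    exact OrthProofAux.lower hn3 rfl hm c₁ c₂ h1 h2 h3
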